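/- Let G ⊂ ℝ^d be a bounded domain with G ∈ FC(a, x*), i.e., for every x ∈ G there is a unit-speed absolutely continuous curve γ_x : [0, T(x)] → G with γ_x(0) = x, γ_x(T(x)) = x*, and the closed ball B_{at}(γ_x(t)) ⊂ G for all t ∈ [0, T(x)]. Then the circumradius and inradius at x*, namely R̄(G) = sup_{x∈G} ‖x − x*‖ and R_(G) = inf_{x ∈ ∂G} ‖x − x*‖, satisfy R_(G) ≤ R̄(G) ≤ C(a,d) · R_(G) for a constant C(a,d) depending only on a and d. -/

import Mathlib

open Metric Set

/-- The John / flexible cone condition `FC(a, x*)`: for every `x ∈ G` there is a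
unit-speed absolutely continuous curve (here: a 1-Lipschitz curve, `|γ'| = 1` a.e.)
from `x` to the center `x*` along which balls of radius `a·t` stay in `G`. -/
def FCcond {d : ℕ} (a : ℝ) (G : Set (EuclideanSpace ℝ (Fin d)))
    (x₀ : EuclideanSpace ℝ (Fin d)) : Prop :=
  ∀ x ∈ G, ∃ (T : ℝ) (γ : ℝ → EuclideanSpace ℝ (Fin d)), 0 ≤ T ∧
    LipschitzWith 1 γ ∧
    (∀ t ∈ Set.Icc 0 T, ∀ s ∈ Set.Icc 0 T, dist (γ t) (γ s) = |t - s|) ∧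
    γ 0 = x ∧ γ T = x₀ ∧
    ∀ t ∈ Set.Icc 0 T, closedBall (γ t) (a * t) ⊆ G

/-- Circumradius of `G` seen from `x₀`. -/
noncomputable def circumR {d : ℕ} (G : Set (EuclideanSpace ℝ (Fin d)))
    (x₀ : EuclideanSpace ℝ (Fin d)) : ℝ :=
  sSup {r : ℝ | ∃ x ∈ G, r = dist x x₀}

/-- Inradius of `G` at `x₀`, i.e. the distance from `x₀` to the boundary. -/
noncomputable def inR {d : ℕ} (G : Set (EuclideanSpace ℝ (Fin d)))
    (x₀ : EuclideanSpace ℝ (Fin d)) : ℝ :=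
  sInf {r : ℝ | ∃ x ∈ frontier G, r = dist x x₀}

theorem circumradius_comparable_inradius_of_FC (d : ℕ) (a : ℝ) (ha : 0 < a) :
    ∃ C : ℝ, 0 < C ∧
      ∀ (G : Set (EuclideanSpace ℝ (Fin d))) (x₀ : EuclideanSpace ℝ (Fin d)),
        IsOpen G → IsConnected G → Bornology.IsBounded G → x₀ ∈ G →
        FCcond a G x₀ →
        inR G x₀ ≤ circumR G x₀ ∧ circumR G x₀ ≤ C * inR G x₀ := by
  refine ⟨a⁻¹ + 1, by positivity, ?_⟩
  intro G x₀ hGopen _hGconn hGbd hx₀ hFC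
  set S : Set ℝ := {r : ℝ | ∃ x ∈ G, r = dist x x₀} with hSdef
  have hSne : S.Nonempty := ⟨dist x₀ x₀, x₀, hx₀, rfl⟩
  obtain ⟨R, hR⟩ := hGbd.subset_closedBall x₀
  have hSbdd : BddAbove S := ⟨R, by rintro r ⟨x, hx, rfl⟩; exact hR hx⟩
  have hR0 : 0 ≤ R := by simpa using hR hx₀
  have hSnn : ∀ r ∈ S, 0 ≤ r := by rintro r ⟨x, hx, rfl⟩; exact dist_nonneg
  have hinR0 : 0 ≤ inR G x₀ :=
    Real.sInf_nonneg (by rintro r ⟨y, hy, rfl⟩; exact dist_nonneg)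
  have hkey : ∀ x ∈ G, ∀ y ∈ frontier G, a * dist x x₀ ≤ dist y x₀ := by
    intro x hx y hy
    obtain ⟨T, γ, hT, _, hdist, hγ0, hγT, hball⟩ := hFC x hx
    have hdx : dist x x₀ = T := by
      have := hdist 0 ⟨le_refl 0, hT⟩ T ⟨hT, le_refl T⟩
      rw [hγ0, hγT] at this
      rw [this, abs_of_nonpos (by linarith), neg_sub, sub_zero]
    have hyG : y ∉ G := by
      have := hy.2
      rw [hGopen.interior_eq] at this
      exact this
    have hball' : closedBall x₀ (a * T) ⊆ G := by
      have := hball T ⟨hT, le_refl T⟩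
      rwa [hγT] at this
    have : y ∉ closedBall x₀ (a * T) := fun h => hyG (hball' h)
    rw [mem_closedBall, not_le] at this
    rw [hdx]; linarith
  by_cases hfr : (frontier G).Nonempty
  · obtain ⟨y, hy⟩ := hfr
    constructor
    · have h1 : inR G x₀ ≤ dist y x₀ :=
        csInf_le ⟨0, by rintro r ⟨z, hz, rfl⟩; exact dist_nonneg⟩ ⟨y, hy, rfl⟩
      have h2 : dist y x₀ ≤ circumR G x₀ := by
        have hsub : closure G ⊆ closedBall x₀ (circumR G x₀) :=
          closure_minimal (fun x hx => le_csSup hSbdd ⟨x, hx, rfl⟩)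
            Metric.isClosed_closedBall
        exact hsub (frontier_subset_closure hy)
      linarith
    · have hle : ∀ r ∈ S, r ≤ a⁻¹ * inR G x₀ := by
        rintro r ⟨x, hx, rfl⟩
        have h3 : a * dist x x₀ ≤ inR G x₀ :=
          le_csInf ⟨dist y x₀, y, hy, rfl⟩
            (by rintro r ⟨z, hz, rfl⟩; exact hkey x hx z hz)
        rw [← mul_le_mul_iff_right₀ ha]
        calc a * dist x x₀ ≤ inR G x₀ := h3
          _ = a * (a⁻¹ * inR G x₀) := by field_simp
      have h4 : circumR G x₀ ≤ a⁻¹ * inR G x₀ := csSup_le hSne hle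
      nlinarith
  · -- frontier is empty: G is clopen, hence `univ`, and the space is bounded,
    -- so every point coincides with `x₀`.
    have hclopen : IsClopen G := isClopen_iff_frontier_eq_empty.mpr
      (Set.not_nonempty_iff_eq_empty.mp hfr)
    have hGuniv : G = Set.univ := hclopen.eq_univ ⟨x₀, hx₀⟩
    have hzero : ∀ x : EuclideanSpace ℝ (Fin d), dist x x₀ = 0 := by
      intro x
      by_contra h
      have hpos : 0 < dist x x₀ := lt_of_le_of_ne dist_nonneg (Ne.symm h)
      set c : ℝ := (R + 1) / dist x x₀ with hc
      set z : EuclideanSpace ℝ (Fin d) := x₀ + c • (x - x₀) with hz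
      have hzd : dist z x₀ = R + 1 := by
        rw [dist_eq_norm]
        have : z - x₀ = c • (x - x₀) := by rw [hz]; abel
        rw [this, norm_smul, Real.norm_eq_abs, abs_of_nonneg (by positivity),
          ← dist_eq_norm, hc]
        field_simp
      have : dist z x₀ ≤ R := by
        have : z ∈ G := by rw [hGuniv]; trivial
        simpa using hR this
      linarith
    have hSsub : ∀ r ∈ S, r ≤ 0 := by
      rintro r ⟨x, hx, rfl⟩; rw [hzero x]
    have hcirc0 : circumR G x₀ = 0 :=
      le_antisymm (csSup_le hSne hSsub)
        (le_csSup hSbdd ⟨x₀, hx₀, by simp⟩)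
    have hin0 : inR G x₀ = 0 := by
      unfold inR
      have : {r : ℝ | ∃ x ∈ frontier G, r = dist x x₀} = ∅ := by
        rw [Set.not_nonempty_iff_eq_empty.mp hfr]; simp
      rw [this, Real.sInf_empty]
    rw [hcirc0, hin0]
    norm_num
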